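/- Let X̂ ∈ SE(3), U ∈ se(3), let y₁,…,y_N ∈ ℝ⁴ be unit vectors, ẙ₁,…,ẙ_N ∈ ℝ⁴ unit vectors, and k₁,…,k_N > 0. Define f : ℝ → ℝ by f(t) := Σᵢ₌₁^N (kᵢ/2) · |(I₄ + tU)X̂yᵢ / |(I₄ + tU)X̂yᵢ| − ẙᵢ|². Then f is differentiable at t = 0 with f′(0) = ⟨Δ(X̂, Y), U⟩ = tr(Δ(X̂, Y)ᵀ U), i.e. the right-trivialized derivative of the cost C(X̂, Y) := Σᵢ (kᵢ/2)|X̂yᵢ/|X̂yᵢ| − ẙᵢ|² in the direction UX̂ equals ⟨−P(Σᵢ kᵢ(I₄ − eᵢeᵢᵀ)ẙᵢeᵢᵀ), U⟩ where eᵢ := X̂yᵢ/|X̂yᵢ|. -/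

import Mathlib

open Matrix BigOperators

noncomputable section

/-- The Euclidean norm of a vector in `ℝⁿ`. -/
def enorm₂ {n : ℕ} (x : Fin n → ℝ) : ℝ := Real.sqrt (∑ i, x i ^ 2)

/-- Normalization of a vector: `x / |x|`. -/
def nrm {n : ℕ} (x : Fin n → ℝ) : Fin n → ℝ := (enorm₂ x)⁻¹ • x

/-- `R ∈ SO(3)`: rotation matrices. -/
def SO3 (R : Matrix (Fin 3) (Fin 3) ℝ) : Prop := Rᵀ * R = 1 ∧ R.det = 1

/-- The 4×4 block matrix `[[M, m],[0ᵀ, 0]]`. -/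
def blk (M : Matrix (Fin 3) (Fin 3) ℝ) (m : Fin 3 → ℝ) : Matrix (Fin 4) (Fin 4) ℝ :=
  fun i j =>
    if h : (i : ℕ) < 3 then
      if h' : (j : ℕ) < 3 then M ⟨i, h⟩ ⟨j, h'⟩ else m ⟨i, h⟩
    else 0

/-- The 4×4 block matrix `[[R, p],[0ᵀ, 1]]`. -/
def toSE3 (R : Matrix (Fin 3) (Fin 3) ℝ) (p : Fin 3 → ℝ) : Matrix (Fin 4) (Fin 4) ℝ :=
  fun i j =>
    if h : (i : ℕ) < 3 then
      if h' : (j : ℕ) < 3 then R ⟨i, h⟩ ⟨j, h'⟩ else p ⟨i, h⟩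
    else if (j : ℕ) < 3 then 0 else 1

/-- The Special Euclidean group SE(3), as a subset of `ℝ^{4×4}`. -/
def SE3 : Set (Matrix (Fin 4) (Fin 4) ℝ) := {X | ∃ R p, SO3 R ∧ X = toSE3 R p}

/-- The skew-symmetric matrix `ω_×` associated with the cross product by `ω`. -/
def crossMat (ω : Fin 3 → ℝ) : Matrix (Fin 3) (Fin 3) ℝ :=
  !![0, -ω 2, ω 1; ω 2, 0, -ω 0; -ω 1, ω 0, 0]

/-- The cross product on `ℝ³`. -/
def cross3 (u v : Fin 3 → ℝ) : Fin 3 → ℝ :=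
  ![u 1 * v 2 - u 2 * v 1, u 2 * v 0 - u 0 * v 2, u 0 * v 1 - u 1 * v 0]

/-- The Lie algebra se(3), as a subset of `ℝ^{4×4}`. -/
def se3 : Set (Matrix (Fin 4) (Fin 4) ℝ) := {A | ∃ ω V, A = blk (crossMat ω) V}

/-- The projection `P : ℝ^{4×4} → se(3)`:
`P([[M₁, m₂],[m₃ᵀ, m₄]]) = [[(M₁ − M₁ᵀ)/2, m₂],[0ᵀ, 0]]`. -/
def projP (M : Matrix (Fin 4) (Fin 4) ℝ) : Matrix (Fin 4) (Fin 4) ℝ :=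
  fun i j =>
    if (i : ℕ) < 3 then (if (j : ℕ) < 3 then (M i j - M j i) / 2 else M i j) else 0

/-- The trace (Frobenius) inner product `⟨M₁, M₂⟩ = tr(M₁ᵀ M₂)`. -/
def mip (M₁ M₂ : Matrix (Fin 4) (Fin 4) ℝ) : ℝ := (M₁ᵀ * M₂).trace

/-- First three components of a vector in `ℝ⁴`. -/
def vbar (x : Fin 4 → ℝ) : Fin 3 → ℝ := fun i => x (Fin.castSucc i)

/-- The vector `[v; c] ∈ ℝ⁴`. -/
def vec4 (v : Fin 3 → ℝ) (c : ℝ) : Fin 4 → ℝ := Fin.snoc v c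

/-- The innovation term `Δ(X̂, Y) = −P(Σᵢ kᵢ (I₄ − eᵢeᵢᵀ) ẙᵢ eᵢᵀ)` where
`eᵢ = X̂yᵢ/|X̂yᵢ|`. -/
def innov {N : ℕ} (k : Fin N → ℝ) (ystar y : Fin N → Fin 4 → ℝ)
    (Xh : Matrix (Fin 4) (Fin 4) ℝ) : Matrix (Fin 4) (Fin 4) ℝ :=
  -projP (∑ i, k i •
    ((1 - vecMulVec (nrm (Xh *ᵥ y i)) (nrm (Xh *ᵥ y i))) *
      vecMulVec (ystar i) (nrm (Xh *ᵥ y i))))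

lemma enorm₂_sq {n : ℕ} (x : Fin n → ℝ) : enorm₂ x ^ 2 = ∑ i, x i ^ 2 :=
  Real.sq_sqrt (by positivity)

lemma enorm₂_pos {n : ℕ} (x : Fin n → ℝ) (hx : x ≠ 0) : 0 < enorm₂ x := by
  have : ∃ i, x i ≠ 0 := by
    by_contra h; push_neg at h; exact hx (funext h)
  obtain ⟨i, hi⟩ := this
  apply Real.sqrt_pos.2
  exact Finset.sum_pos' (fun j _ => sq_nonneg _) ⟨i, Finset.mem_univ i, by positivity⟩

lemma sum_nrm_sq {n : ℕ} (x : Fin n → ℝ) (hx : x ≠ 0) : ∑ j, nrm x j ^ 2 = 1 := by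
  have h := enorm₂_pos x hx
  have h2 : ∑ j, nrm x j ^ 2 = (enorm₂ x)⁻¹ ^ 2 * ∑ j, x j ^ 2 := by
    rw [Finset.mul_sum]; exact Finset.sum_congr rfl fun j _ => by simp [nrm]; ring
  rw [h2, ← enorm₂_sq]
  field_simp

lemma hasDerivAt_term (U : Matrix (Fin 4) (Fin 4) ℝ) (z w : Fin 4 → ℝ) (hz : z ≠ 0) (k : ℝ) :
    HasDerivAt (fun t : ℝ => (k / 2) * (enorm₂ (nrm ((1 + t • U) *ᵥ z) - w)) ^ 2)
      (k * ∑ j, (nrm z j - w j) *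
        ((U *ᵥ nrm z) j - nrm z j * ∑ l, nrm z l * (U *ᵥ nrm z) l)) 0 := by
  set u := U *ᵥ z with hu
  have hn : 0 < enorm₂ z := enorm₂_pos z hz
  set n := enorm₂ z with hndef
  set q : ℝ → ℝ := fun t => ∑ l, (z l + t * u l) ^ 2 with hqdef
  have hq0 : q 0 = n ^ 2 := by simp [hqdef]; rw [enorm₂_sq]
  have hq0ne : q 0 ≠ 0 := by rw [hq0]; positivity
  have hsq0 : Real.sqrt (q 0) = n := by rw [hq0]; exact Real.sqrt_sq hn.le
  have hcomp : ∀ l, HasDerivAt (fun t : ℝ => z l + t * u l) (u l) 0 := fun l =>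
    ((hasDerivAt_id 0).mul_const (u l)).const_add (z l) |>.congr_deriv (by ring)
  have hq : HasDerivAt q (∑ l, 2 * z l * u l) 0 := by
    apply HasDerivAt.fun_sum
    intro l _
    have := (hcomp l).pow 2
    refine this.congr_deriv ?_
    simp
  have hqs : HasDerivAt (fun t => Real.sqrt (q t))
      ((∑ l, 2 * z l * u l) / (2 * Real.sqrt (q 0))) 0 := hq.sqrt hq0ne
  have hsne : Real.sqrt (q 0) ≠ 0 := by rw [hsq0]; exact hn.ne'
  have hc : ∀ j, HasDerivAt (fun t : ℝ => (z j + t * u j) / Real.sqrt (q t))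
      ((u j * Real.sqrt (q 0) - (z j + 0 * u j) * ((∑ l, 2 * z l * u l) / (2 * Real.sqrt (q 0))))
        / Real.sqrt (q 0) ^ 2) 0 := fun j => (hcomp j).div hqs hsne
  have hfe : (fun t : ℝ => (k / 2) * (enorm₂ (nrm ((1 + t • U) *ᵥ z) - w)) ^ 2)
      = fun t : ℝ => ∑ j, (k / 2) * ((z j + t * u j) / Real.sqrt (q t) - w j) ^ 2 := by
    funext t
    have hrw : (1 + t • U) *ᵥ z = fun j => z j + t * u j := by
      funext j
      simp [Matrix.add_mulVec, Matrix.smul_mulVec, hu]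
    rw [hrw, enorm₂_sq, Finset.mul_sum]
    apply Finset.sum_congr rfl
    intro j _
    congr 1
    simp [nrm, enorm₂, hqdef, div_eq_inv_mul, mul_comm]
  rw [hfe]
  have htot := HasDerivAt.fun_sum (𝕜 := ℝ)
    (A := fun j (t : ℝ) => (k / 2) * ((z j + t * u j) / Real.sqrt (q t) - w j) ^ 2)
    (u := Finset.univ)
    (fun j _ => (((hc j).sub_const (w j)).pow 2).const_mul (k / 2))
  refine htot.congr_deriv ?_
  symm
  rw [Finset.mul_sum]
  apply Finset.sum_congr rfl
  intro j _
  have hnz : nrm z = n⁻¹ • z := rfl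
  have hUe : U *ᵥ nrm z = n⁻¹ • u := by rw [hnz, Matrix.mulVec_smul, hu]
  have hS : ∑ l, nrm z l * (U *ᵥ nrm z) l = n⁻¹ * n⁻¹ * ∑ l, z l * u l := by
    rw [hUe, Finset.mul_sum]
    exact Finset.sum_congr rfl fun l _ => by simp [hnz]; ring
  have h2S : ∑ l, 2 * z l * u l = 2 * ∑ l, z l * u l := by
    rw [Finset.mul_sum]; exact Finset.sum_congr rfl fun l _ => by ring
  rw [hS, hUe, hsq0, h2S, hnz]
  simp only [Pi.smul_apply, smul_eq_mul]
  have hne : n ≠ 0 := hn.ne'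
  field_simp
  linear_combination (-((k * z j * n * w j * ∑ x, z x * u x) * 2 + k * z j * n ^ 2 * u j * 2 -
    (k * z j ^ 2 * ∑ x, z x * u x) * 2 - k * n ^ 3 * w j * u j * 2)) * mul_inv_cancel₀ hne

lemma fin3_mk2 (h : 2 < 3) : (⟨2, h⟩ : Fin 3) = 2 := rfl
lemma fin3_mk2' (h : ((2 : Fin 4) : ℕ) < 3) : (⟨((2 : Fin 4) : ℕ), h⟩ : Fin 3) = 2 := rfl

lemma key_alg (k : ℝ) (e w : Fin 4 → ℝ) (he : ∑ j, e j ^ 2 = 1) (ω V : Fin 3 → ℝ) :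
    k * ∑ j, (e j - w j) *
        ((blk (crossMat ω) V *ᵥ e) j - e j * ∑ l, e l * (blk (crossMat ω) V *ᵥ e) l)
      = ((-projP (k • ((1 - vecMulVec e e) * vecMulVec w e)))ᵀ *
          blk (crossMat ω) V).trace := by
  simp (config := { decide := true }) only [Matrix.trace, Matrix.diag, Matrix.mul_apply,
    Matrix.mulVec, dotProduct, Fin.sum_univ_four, projP, blk, crossMat, vecMulVec,
    Matrix.sub_apply, Matrix.one_apply, Matrix.smul_apply, smul_eq_mul, Matrix.transpose_apply,
    Matrix.neg_apply, Matrix.of_apply, Matrix.cons_val', Matrix.cons_val_zero,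
    Matrix.cons_val_one, Matrix.head_cons, Matrix.empty_val', Matrix.cons_val_fin_one,
    Matrix.head_fin_const, Fin.mk_zero, Fin.mk_one, fin3_mk2, fin3_mk2', Matrix.cons_val]
  norm_num
  simp only [Fin.sum_univ_four] at he ⊢
  linear_combination (-(k * e 3 * (V 0 * e 0 + V 1 * e 1 + V 2 * e 2))) * he

lemma toSE3_mulVec_ne_zero (R : Matrix (Fin 3) (Fin 3) ℝ) (p : Fin 3 → ℝ)
    (hR : SO3 R) (v : Fin 4 → ℝ) (hv : enorm₂ v = 1) : toSE3 R p *ᵥ v ≠ 0 := by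
  intro h
  have h3 : v 3 = 0 := by
    have := congrFun h 3
    simpa [toSE3, Matrix.mulVec, dotProduct, Fin.sum_univ_four] using this
  have h0 := congrFun h 0
  have h1 := congrFun h 1
  have h2 := congrFun h 2
  simp [toSE3, Matrix.mulVec, dotProduct, Fin.sum_univ_four, h3] at h0 h1 h2
  have hw : R *ᵥ vbar v = 0 := by
    funext i
    fin_cases i <;>
      simp [Matrix.mulVec, dotProduct, Fin.sum_univ_three, vbar, Fin.castSucc] <;>
      [exact h0; exact h1; exact h2]
  have hvb : vbar v = 0 := by
    have := congrArg (fun w => Rᵀ *ᵥ w) hw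
    simpa [Matrix.mulVec_mulVec, hR.1, Matrix.one_mulVec, Matrix.mulVec_zero] using this
  have hv0 : v = 0 := by
    funext j
    fin_cases j
    · exact congrFun hvb 0
    · exact congrFun hvb 1
    · exact congrFun hvb 2
    · exact h3
  rw [hv0] at hv
  simp [enorm₂] at hv

lemma projP_sum {N : ℕ} (M : Fin N → Matrix (Fin 4) (Fin 4) ℝ) :
    projP (∑ i, M i) = ∑ i, projP (M i) := by
  funext i j
  simp only [projP, Finset.sum_apply, Matrix.sum_apply]
  split_ifs
  · rw [← Finset.sum_sub_distrib, ← Finset.sum_div]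
  · rfl
  · simp
/-- the right-trivialized derivative of the cost
`C(X̂,Y) = Σᵢ (kᵢ/2)|X̂yᵢ/|X̂yᵢ| − ẙᵢ|²` in the direction `UX̂` equals
`⟨Δ(X̂,Y), U⟩ = tr(Δ(X̂,Y)ᵀ U)`. -/
theorem cost_right_trivialized_derivative {N : ℕ}
    (Xh : Matrix (Fin 4) (Fin 4) ℝ) (hXh : Xh ∈ SE3)
    (U : Matrix (Fin 4) (Fin 4) ℝ) (hU : U ∈ se3)
    (y ystar : Fin N → Fin 4 → ℝ)
    (hy : ∀ i, enorm₂ (y i) = 1) (hystar : ∀ i, enorm₂ (ystar i) = 1)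
    (k : Fin N → ℝ) (hk : ∀ i, 0 < k i) :
    HasDerivAt
      (fun t : ℝ =>
        ∑ i, (k i / 2) * (enorm₂ (nrm ((1 + t • U) *ᵥ (Xh *ᵥ y i)) - ystar i)) ^ 2)
      (((innov k ystar y Xh)ᵀ * U).trace) 0 := by

  obtain ⟨R, p, hR, hXeq⟩ := hXh
  obtain ⟨ω, V, hUeq⟩ := hU
  have hz : ∀ i, Xh *ᵥ y i ≠ 0 := fun i => by
    rw [hXeq]; exact toSE3_mulVec_ne_zero R p hR (y i) (hy i)
  have htot := HasDerivAt.fun_sum (𝕜 := ℝ) (u := Finset.univ)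
    (A := fun i (t : ℝ) =>
      (k i / 2) * (enorm₂ (nrm ((1 + t • U) *ᵥ (Xh *ᵥ y i)) - ystar i)) ^ 2)
    (A' := fun i => k i * ∑ j, (nrm (Xh *ᵥ y i) j - ystar i j) *
        ((U *ᵥ nrm (Xh *ᵥ y i)) j -
          nrm (Xh *ᵥ y i) j * ∑ l, nrm (Xh *ᵥ y i) l * (U *ᵥ nrm (Xh *ᵥ y i)) l))
    (fun i _ => hasDerivAt_term U (Xh *ᵥ y i) (ystar i) (hz i) (k i))
  refine htot.congr_deriv ?_
  symm
  have hterm : ∀ i, (k i * ∑ j, (nrm (Xh *ᵥ y i) j - ystar i j) *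
        ((U *ᵥ nrm (Xh *ᵥ y i)) j -
          nrm (Xh *ᵥ y i) j * ∑ l, nrm (Xh *ᵥ y i) l * (U *ᵥ nrm (Xh *ᵥ y i)) l))
      = ((-projP (k i • ((1 - vecMulVec (nrm (Xh *ᵥ y i)) (nrm (Xh *ᵥ y i))) *
          vecMulVec (ystar i) (nrm (Xh *ᵥ y i)))))ᵀ * U).trace := fun i => by
    rw [hUeq]
    exact key_alg (k i) (nrm (Xh *ᵥ y i)) (ystar i) (sum_nrm_sq _ (hz i)) ω V
  rw [innov, projP_sum]
  simp only [Matrix.transpose_neg, Matrix.transpose_sum, Matrix.neg_mul, Matrix.trace_neg,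
    Matrix.sum_mul, Matrix.trace_sum, ← Finset.sum_neg_distrib]
  exact (Finset.sum_congr rfl fun i _ => by
    rw [hterm i]
    simp [Matrix.transpose_neg, Matrix.neg_mul, Matrix.trace_neg]).symm
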